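/- Let u ∈ N and v ∈ V with v ≠ 0. The bounded linear operator T : V⁻ → V⁻ defined by ⟨Th, φ⟩_V = a(h,φ) − ∂²_{vv}b(u,v)[h,φ] for h, φ ∈ V⁻ satisfies ⟨Th, h⟩_V ≤ −‖h‖_V² for all h ∈ V⁻; in particular T is a bijection of V⁻ with bounded inverse. -/

import Mathlib

open scoped InnerProductSpace
open Filter Topology

private lemma mono_grad {W : Type*} [NormedAddCommGroup W] [InnerProductSpace ℝ W]
    (g : ℝ → ℝ) (hg0 : ∀ t, 0 ≤ t → 0 ≤ g t)
    (hgm : ∀ s t, 0 ≤ s → s ≤ t → g s ≤ g t) (x y : W) :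
    0 ≤ ⟪g ‖y‖ • y - g ‖x‖ • x, y - x⟫_ℝ := by
  have hxy : ⟪x, y⟫_ℝ ≤ ‖x‖ * ‖y‖ := real_inner_le_norm x y
  have hyx : ⟪y, x⟫_ℝ = ⟪x, y⟫_ℝ := real_inner_comm x y
  have hx0 : (0:ℝ) ≤ ‖x‖ := norm_nonneg x
  have hy0 : (0:ℝ) ≤ ‖y‖ := norm_nonneg y
  have hax : 0 ≤ g ‖x‖ := hg0 _ hx0
  have hay : 0 ≤ g ‖y‖ := hg0 _ hy0
  have hkey : 0 ≤ (‖y‖ - ‖x‖) * (g ‖y‖ * ‖y‖ - g ‖x‖ * ‖x‖) := by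
    rcases le_total ‖x‖ ‖y‖ with h | h
    · have h1 : g ‖x‖ ≤ g ‖y‖ := hgm _ _ hx0 h
      have : g ‖x‖ * ‖x‖ ≤ g ‖y‖ * ‖y‖ := mul_le_mul h1 h hx0 hay
      nlinarith
    · have h1 : g ‖y‖ ≤ g ‖x‖ := hgm _ _ hy0 h
      have : g ‖y‖ * ‖y‖ ≤ g ‖x‖ * ‖x‖ := mul_le_mul h1 h hy0 hax
      nlinarith
  have hexp : ⟪g ‖y‖ • y - g ‖x‖ • x, y - x⟫_ℝ =
      g ‖y‖ * (‖y‖^2) + g ‖x‖ * (‖x‖^2) - (g ‖y‖ + g ‖x‖) * ⟪x, y⟫_ℝ := by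
    rw [inner_sub_left, inner_sub_right, inner_sub_right, real_inner_smul_left,
      real_inner_smul_left, real_inner_smul_left, real_inner_smul_left,
      real_inner_self_eq_norm_sq, real_inner_self_eq_norm_sq, hyx]
    ring
  rw [hexp]
  nlinarith [mul_le_mul_of_nonneg_left hxy hay, mul_le_mul_of_nonneg_left hxy hax]

theorem stmt_3
    {W : Type*} [NormedAddCommGroup W] [InnerProductSpace ℝ W] [CompleteSpace W]
    {V : Type*} [NormedAddCommGroup V] [InnerProductSpace ℝ V] [CompleteSpace V]
    (ι : V →L[ℝ] W) (hι : Function.Injective ι)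
    (c : ℝ) (hc : 0 < c) (hιc : ∀ v : V, ‖ι v‖ ≤ c * ‖v‖)
    (Pp Pm : V →L[ℝ] V)
    (hP_sum : ∀ v : V, Pp v + Pm v = v)
    (hPp_idem : ∀ v : V, Pp (Pp v) = Pp v)
    (hPm_idem : ∀ v : V, Pm (Pm v) = Pm v)
    (hP_orth : ∀ v w : V, ⟪Pp v, Pm w⟫_ℝ = 0)
    (a : V →L[ℝ] V →L[ℝ] ℝ)
    (ha : ∀ v w : V, a v w = ⟪Pp v, Pp w⟫_ℝ - ⟪Pm v, Pm w⟫_ℝ)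
    {N : Type*} [NormedAddCommGroup N] [InnerProductSpace ℝ N] [CompleteSpace N]
    (p : ℝ) (hp : 1 < p)
    (b : N → V → ℝ) (f : N → ℝ → ℝ)
    (hb_C2 : ContDiff ℝ 2 (fun q : N × V => b q.1 q.2))
    (hb_zero : ∀ u : N, b u 0 = 0)
    (hb_nonneg : ∀ (u : N) (v : V), 0 ≤ b u v)
    (hf_cont : ContinuousOn (fun q : N × ℝ => f q.1 q.2) (Set.univ ×ˢ Set.Ici (0:ℝ)))
    (hf_zero : ∀ u : N, f u 0 = 0)
    (hf_mono : ∀ u : N, StrictMonoOn (f u) (Set.Ici (0:ℝ)))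
    (hf_nonneg : ∀ (u : N) (t : ℝ), 0 ≤ t → 0 ≤ f u t)
    (hgrad : ∀ (u : N) (v h : V), fderiv ℝ (b u) v h = f u ‖ι v‖ * ⟪ι v, ι h⟫_ℝ)
    (C₂ : ℝ → ℝ) (hC₂_cont : ContinuousOn C₂ (Set.Ici (0:ℝ)))
    (hC₂_pos : ∀ t : ℝ, 0 ≤ t → 0 < C₂ t)
    (hbII : ∀ (u : N) (v h k : V),
      |fderiv ℝ (fun w => fderiv ℝ (b u) w h) v k| ≤ C₂ ‖u‖ * ‖ι v‖ ^ (p - 1) * ‖ι h‖ * ‖ι k‖)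
    (u : N) (v : V) (hv : v ≠ 0)
    (T : V →L[ℝ] V)
    (hT_range : ∀ h : V, Pm h = h → Pm (T h) = T h)
    (hT_def : ∀ h φ : V, Pm h = h → Pm φ = φ →
      ⟪T h, φ⟫_ℝ = a h φ - fderiv ℝ (fun w => fderiv ℝ (b u) w h) v φ) :
    (∀ h : V, Pm h = h → ⟪T h, h⟫_ℝ ≤ -‖h‖ ^ 2) ∧
    Set.BijOn T {x : V | Pm x = x} {x : V | Pm x = x} ∧
    ∃ C : ℝ, 0 < C ∧ ∀ h : V, Pm h = h → ‖h‖ ≤ C * ‖T h‖ := by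
  -- nonnegativity of the second derivative in diagonal directions
  have hD : ∀ h : V, 0 ≤ fderiv ℝ (fun w => fderiv ℝ (b u) w h) v h := by
    intro h
    by_cases hdiff : DifferentiableAt ℝ (fun w => fderiv ℝ (b u) w h) v
    · set G : V → ℝ := fun w => fderiv ℝ (b u) w h with hG
      set ψ : ℝ → ℝ := fun t => G (v + t • h) with hψdef
      have hγ : ∀ t : ℝ, HasDerivAt (fun s : ℝ => v + s • h) h t := by
        intro t
        simpa using ((hasDerivAt_id t).smul_const h).const_add v
      have hψ : HasDerivAt ψ (fderiv ℝ G v h) 0 := by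
        have hFD : HasFDerivAt G (fderiv ℝ G v) ((fun s : ℝ => v + s • h) 0) := by
          simpa using hdiff.hasFDerivAt
        exact hFD.comp_hasDerivAt 0 (hγ 0)
      have hslope : Tendsto (slope ψ 0) (𝓝[≠] (0:ℝ)) (𝓝 (fderiv ℝ G v h)) :=
        hasDerivAt_iff_tendsto_slope.mp hψ
      have hnn : ∀ t : ℝ, t ≠ 0 → 0 ≤ slope ψ 0 t := by
        intro t ht
        have hval : ∀ s : ℝ, ψ s = ⟪f u ‖ι (v + s • h)‖ • ι (v + s • h), ι h⟫_ℝ := by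
          intro s
          rw [hψdef]
          simp only [hG, hgrad u (v + s • h) h, real_inner_smul_left]
        have hkey : 0 ≤ ⟪f u ‖ι (v + t • h)‖ • ι (v + t • h) - f u ‖ι v‖ • ι v,
            ι (v + t • h) - ι v⟫_ℝ := by
          refine mono_grad (f u) (fun s hs => hf_nonneg u s hs) (fun s r hs hsr => ?_) _ _
          rcases eq_or_lt_of_le hsr with rfl | h'
          · exact le_rfl
          · exact le_of_lt ((hf_mono u) hs (le_trans hs hsr) h')
        have hι' : ι (v + t • h) - ι v = t • ι h := by
          simp [map_add, map_smul]
        rw [hι'] at hkey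
        rw [real_inner_smul_right] at hkey
        have hdiffval : ψ t - ψ 0 =
            ⟪f u ‖ι (v + t • h)‖ • ι (v + t • h) - f u ‖ι v‖ • ι v, ι h⟫_ℝ := by
          rw [hval t, hval 0, inner_sub_left]
          norm_num
        have hkey' : 0 ≤ t * (ψ t - ψ 0) := by rw [hdiffval]; exact hkey
        have hs : slope ψ 0 t = (t * (ψ t - ψ 0)) / (t * t) := by
          rw [slope_def_field]
          field_simp
          ring
        rw [hs]
        exact div_nonneg hkey' (mul_self_nonneg t)
      refine ge_of_tendsto hslope ?_
      filter_upwards [self_mem_nhdsWithin] with t ht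
      exact hnn t ht
    · simp [fderiv_zero_of_not_differentiableAt hdiff]
  -- Part 1
  have h1 : ∀ h : V, Pm h = h → ⟪T h, h⟫_ℝ ≤ -‖h‖ ^ 2 := by
    intro h hh
    have hPp0 : Pp h = 0 := by
      have := hP_sum h
      rw [hh] at this
      simpa using this
    have := hT_def h h hh hh
    rw [ha, hPp0, hh] at this
    rw [this]
    have := hD h
    have hni : ⟪h, h⟫_ℝ = ‖h‖ ^ 2 := real_inner_self_eq_norm_sq h
    simp only [inner_zero_left]
    linarith
  -- Part 3 (with C = 1)
  have h3 : ∀ h : V, Pm h = h → ‖h‖ ≤ ‖T h‖ := by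
    intro h hh
    rcases eq_or_ne h 0 with rfl | hne
    · simp
    · have hpos : 0 < ‖h‖ := norm_pos_iff.mpr hne
      have hcs : -⟪T h, h⟫_ℝ ≤ ‖T h‖ * ‖h‖ := by
        have := abs_real_inner_le_norm (T h) h
        cases abs_cases (⟪T h, h⟫_ℝ) with
        | inl hc => linarith [this, hc.1]
        | inr hc => linarith [this, hc.1]
      have := h1 h hh
      have h2 : ‖h‖ ^ 2 ≤ ‖T h‖ * ‖h‖ := by linarith
      have : ‖h‖ * ‖h‖ ≤ ‖T h‖ * ‖h‖ := by nlinarith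
      exact le_of_mul_le_mul_right this hpos
  -- injectivity on the subspace
  have hinj : Set.InjOn T {x : V | Pm x = x} := by
    intro x hx y hy hxy
    have hd : Pm (x - y) = x - y := by
      rw [map_sub, hx, hy]
    have hT0 : T (x - y) = 0 := by rw [map_sub, hxy, sub_self]
    have := h3 (x - y) hd
    rw [hT0] at this
    simp only [norm_zero] at this
    have : ‖x - y‖ = 0 := le_antisymm this (norm_nonneg _)
    exact sub_eq_zero.mp (norm_eq_zero.mp this)
  -- the subspace as a closed submodule
  set Q : V →L[ℝ] V := Pm - ContinuousLinearMap.id ℝ V with hQ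
  set K : Submodule ℝ V := LinearMap.ker (Q : V →ₗ[ℝ] V) with hK
  have hmemK : ∀ x : V, x ∈ K ↔ Pm x = x := by
    intro x
    simp [hK, hQ, LinearMap.mem_ker, sub_eq_zero]
  have hKclosed : IsClosed (K : Set V) := ContinuousLinearMap.isClosed_ker Q
  haveI : CompleteSpace K := hKclosed.completeSpace_coe
  -- the operator -T restricted to K
  have hmaps : ∀ x : V, x ∈ K → -(T x) ∈ K := by
    intro x hx
    rw [hmemK] at hx ⊢
    rw [map_neg, hT_range x hx]
  set S : K →L[ℝ] K :=
    ContinuousLinearMap.codRestrict ((-T).comp K.subtypeL) K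
      (fun x => by simpa using hmaps x x.2) with hS
  have hScoe : ∀ x : K, (S x : V) = -(T (x : V)) := fun x => rfl
  have hScoer : ∀ x : K, ‖(x : V)‖ ^ 2 ≤ ⟪S x, x⟫_ℝ := by
    intro x
    have hx : Pm (x : V) = (x : V) := (hmemK _).mp x.2
    have := h1 (x : V) hx
    have hin : ⟪S x, x⟫_ℝ = -⟪T (x : V), (x : V)⟫_ℝ := by
      rw [Submodule.coe_inner, hScoe, inner_neg_left]
    linarith [hin.ge, hin.le]
  have hSnorm : ∀ x : K, ‖x‖ ≤ ‖S x‖ := by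
    intro x
    have hx : Pm (x : V) = (x : V) := (hmemK _).mp x.2
    have := h3 (x : V) hx
    have h2 : ‖S x‖ = ‖T (x : V)‖ := by
      rw [show ‖S x‖ = ‖(S x : V)‖ from rfl, hScoe, norm_neg]
    rw [show ‖x‖ = ‖(x : V)‖ from rfl, h2]
    exact this
  have hSanti : AntilipschitzWith 1 S :=
    S.antilipschitz_of_bound (fun x => by simpa using hSnorm x)
  have hSrange_closed : IsClosed (Set.range S) :=
    hSanti.isClosed_range S.uniformContinuous
  set R : Submodule ℝ K := LinearMap.range (S : K →ₗ[ℝ] K) with hR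
  have hRclosed : IsClosed (R : Set K) := by
    have : (R : Set K) = Set.range S := by
      ext x; simp [hR, LinearMap.mem_range, Set.mem_range]
    rw [this]; exact hSrange_closed
  haveI : CompleteSpace R := hRclosed.completeSpace_coe
  have hRtop : R = ⊤ := by
    rw [← Submodule.orthogonal_eq_bot_iff]
    rw [Submodule.eq_bot_iff]
    intro w hw
    have hSw : S w ∈ R := ⟨w, rfl⟩
    have h0 : ⟪S w, w⟫_ℝ = 0 := hw (S w) hSw
    have := hScoer w
    rw [h0] at this
    have hw0 : ‖(w : V)‖ = 0 := by nlinarith [norm_nonneg (w : V)]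
    have : (w : V) = 0 := norm_eq_zero.mp hw0
    exact Subtype.ext this
  have hSsurj : Function.Surjective S := by
    intro y
    have : y ∈ R := hRtop ▸ Submodule.mem_top
    exact this
  refine ⟨h1, ⟨?_, hinj, ?_⟩, 1, one_pos, fun h hh => by simpa using h3 h hh⟩
  · intro x hx
    exact hT_range x hx
  · intro y hy
    have hyK : -y ∈ K := by
      rw [hmemK]
      rw [map_neg, hy]
    obtain ⟨x, hxS⟩ := hSsurj ⟨-y, hyK⟩
    refine ⟨(x : V), (hmemK _).mp x.2, ?_⟩
    have := congrArg (Subtype.val) hxS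
    rw [hScoe] at this
    simp only at this
    have : -(T (x : V)) = -y := this
    exact neg_injective this
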